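/- arXiv:2212.04797 — 3 statements merged into one kernel-verified Lean document; each statement's English description precedes it below -/
import Mathlib

section
/- For commuting positive semidefinite matrices Σ₁, …, Σ_K, the matrix Σ̄ with Σ̄^{1/2} = K^{-1}(Σ₁^{1/2} + … + Σ_K^{1/2}) satisfies the Fréchet-mean fixed-point identity: the sum over j of (Σ̄^{1/2} Σ_j Σ̄^{1/2})^{1/2} equals K·Σ̄. -/
open Matrix

/-- The square root of a psd matrix, via the spectral theorem. -/
noncomputable def Matrix.PosSemidef.sqrt {m : Type*} [Fintype m] [DecidableEq m]
    {A : Matrix m m ℝ} (hA : A.PosSemidef) : Matrix m m ℝ :=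
  (hA.1.eigenvectorUnitary : Matrix m m ℝ) * diagonal (RCLike.ofReal ∘ Real.sqrt ∘ hA.1.eigenvalues)
    * star (hA.1.eigenvectorUnitary : Matrix m m ℝ)

open scoped MatrixOrder in
lemma Matrix.PosSemidef.sqrt_eq_cfc {m : Type*} [Fintype m] [DecidableEq m]
    {A : Matrix m m ℝ} (hA : A.PosSemidef) : hA.sqrt = CFC.sqrt A := by
  rw [CFC.sqrt_eq_cfc, cfc_nnreal_eq_real _ A, hA.1.cfc_eq]
  simp only [IsHermitian.cfc, Matrix.PosSemidef.sqrt, Unitary.conjStarAlgAut_apply]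
  congr 3
  funext i
  simp [hA.eigenvalues_nonneg i]

open scoped MatrixOrder in
lemma Matrix.PosSemidef.posSemidef_sqrt {m : Type*} [Fintype m] [DecidableEq m]
    {A : Matrix m m ℝ} (hA : A.PosSemidef) : hA.sqrt.PosSemidef := by
  rw [hA.sqrt_eq_cfc]
  exact (CFC.sqrt_nonneg A).posSemidef

open scoped MatrixOrder in
lemma Matrix.PosSemidef.sqrt_mul_self {m : Type*} [Fintype m] [DecidableEq m]
    {A : Matrix m m ℝ} (hA : A.PosSemidef) : hA.sqrt * hA.sqrt = A := by
  rw [hA.sqrt_eq_cfc]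
  exact CFC.sqrt_mul_sqrt_self A hA.nonneg

open scoped MatrixOrder in
lemma Matrix.PosSemidef.eq_sqrt_of_sq_eq {m : Type*} [Fintype m] [DecidableEq m]
    {A B : Matrix m m ℝ} (hB : B.PosSemidef) (hA : A.PosSemidef) (h : B ^ 2 = A) :
    B = hA.sqrt := by
  rw [hA.sqrt_eq_cfc, ← h]
  exact (CFC.sqrt_sq B hB.nonneg).symm

open scoped MatrixOrder in
lemma Matrix.PosSemidef.eq_of_sq_eq_sq {m : Type*} [Fintype m] [DecidableEq m]
    {A B : Matrix m m ℝ} (hA : A.PosSemidef) (hB : B.PosSemidef) (h : A ^ 2 = B ^ 2) :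
    A = B := by
  rw [← CFC.sqrt_sq A hA.nonneg, h, CFC.sqrt_sq B hB.nonneg]

/-- Anything commuting with a psd matrix commutes with its square root. -/
lemma commute_sqrt {m : Type*} [Fintype m] [DecidableEq m]
    {A B : Matrix m m ℝ} (hA : A.PosSemidef) (h : A * B = B * A) :
    hA.sqrt * B = B * hA.sqrt := by
  set U : Matrix m m ℝ := (hA.1.eigenvectorUnitary : Matrix m m ℝ) with hUdef
  have hUU : star U * U = 1 := (Matrix.mem_unitaryGroup_iff').mp hA.1.eigenvectorUnitary.2
  have hUU' : U * star U = 1 := (Matrix.mem_unitaryGroup_iff).mp hA.1.eigenvectorUnitary.2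
  set μ := hA.1.eigenvalues
  set D : Matrix m m ℝ := diagonal (RCLike.ofReal ∘ μ)
  have hspec : A = U * D * star U := hA.1.spectral_theorem
  set B' : Matrix m m ℝ := star U * B * U with hB'
  have hBU : B = U * B' * star U := by
    rw [hB']
    simp [Matrix.mul_assoc, ← Matrix.mul_assoc U (star U), hUU', hUU]
  have hDB : D * B' = B' * D := by
    have h1 : star U * A = D * star U := by
      rw [hspec]; rw [← Matrix.mul_assoc, ← Matrix.mul_assoc, hUU, Matrix.one_mul]
    have h2 : A * U = U * D := by
      rw [hspec, Matrix.mul_assoc, Matrix.mul_assoc, hUU, Matrix.mul_one]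
    calc D * B' = (D * star U) * B * U := by
          simp [hB', Matrix.mul_assoc]
      _ = star U * (A * B) * U := by rw [← h1]; simp [Matrix.mul_assoc]
      _ = star U * (B * A) * U := by rw [h]
      _ = (star U * B) * (A * U) := by simp [Matrix.mul_assoc]
      _ = B' * D := by rw [h2, hB']; simp [Matrix.mul_assoc]
  have key : ∀ i j, μ i * B' i j = B' i j * μ j := by
    intro i j
    have := congrFun (congrFun hDB i) j
    simpa [D, Matrix.diagonal_mul, Matrix.mul_diagonal, mul_comm] using this
  set E : Matrix m m ℝ := diagonal (RCLike.ofReal ∘ Real.sqrt ∘ μ)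
  have hEB : E * B' = B' * E := by
    ext i j
    simp only [E, Matrix.diagonal_mul, Matrix.mul_diagonal, Function.comp_apply]
    rcases eq_or_ne (B' i j) 0 with h0 | h0
    · simp [h0]
    · have hij : μ i = μ j := by
        have := key i j
        rw [mul_comm (B' i j) (μ j)] at this
        exact mul_right_cancel₀ h0 (by simpa [mul_comm] using this)
      simp [hij, mul_comm]
  have hsqrt : hA.sqrt = U * E * star U := rfl
  rw [hsqrt, hBU]
  calc U * E * star U * (U * B' * star U)
      = U * (E * B') * star U := by
        simp [Matrix.mul_assoc, ← Matrix.mul_assoc (star U) U, hUU]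
    _ = U * (B' * E) * star U := by rw [hEB]
    _ = U * B' * star U * (U * E * star U) := by
        simp [Matrix.mul_assoc, ← Matrix.mul_assoc (star U) U, hUU]

lemma psd_smul_sum {m : Type*} [Fintype m] [DecidableEq m] {K : ℕ}
    {S : Fin K → Matrix m m ℝ} (hS : ∀ j, (S j).PosSemidef) {c : ℝ} (hc : 0 ≤ c) :
    (c • ∑ j, S j).PosSemidef := by
  refine Matrix.PosSemidef.of_dotProduct_mulVec_nonneg ?_ ?_
  · show (c • ∑ j, S j)ᴴ = _
    rw [Matrix.conjTranspose_smul, Matrix.conjTranspose_sum]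
    simp only [star_trivial]
    congr 1
    exact Finset.sum_congr rfl fun j _ => (hS j).1
  · intro x
    rw [Matrix.smul_mulVec, dotProduct_smul]
    have : (0:ℝ) ≤ dotProduct (star x) ((∑ j, S j) *ᵥ x) := by
      have key : ∀ s : Finset (Fin K),
          (0:ℝ) ≤ dotProduct (star x) ((∑ j ∈ s, S j) *ᵥ x) := by
        intro s
        induction s using Finset.induction with
        | empty => simp
        | insert _ _ h ih =>
          rw [Finset.sum_insert h, Matrix.add_mulVec, dotProduct_add]
          exact add_nonneg ((hS _).dotProduct_mulVec_nonneg x) ih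
      exact key Finset.univ
    exact smul_nonneg hc this

/-- For pairwise commuting positive semidefinite matrices `Σ₁, …, Σ_K`, the matrix
`Σ̄` with `Σ̄^{1/2} = K⁻¹ ∑ⱼ Σⱼ^{1/2}` satisfies the Fréchet-mean fixed point identity
`∑ⱼ (Σ̄^{1/2} Σⱼ Σ̄^{1/2})^{1/2} = K · Σ̄`. -/
theorem stmt5 {n K : ℕ} (hK : 0 < K)
    (Sig : Fin K → Matrix (Fin n) (Fin n) ℝ)
    (hSig : ∀ j, (Sig j).PosSemidef)
    (hcomm : ∀ i j, Sig i * Sig j = Sig j * Sig i)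
    (S : Fin K → Matrix (Fin n) (Fin n) ℝ)
    (hS : ∀ j, (S j).PosSemidef) (hSsq : ∀ j, S j * S j = Sig j)
    (A SigBar : Matrix (Fin n) (Fin n) ℝ)
    (hA : A = (K : ℝ)⁻¹ • ∑ j, S j) (hSigBar : SigBar = A * A)
    (Q : Fin K → Matrix (Fin n) (Fin n) ℝ)
    (hQ : ∀ j, (Q j).PosSemidef) (hQsq : ∀ j, Q j * Q j = A * Sig j * A) :
    ∑ j, Q j = (K : ℝ) • SigBar := by
  have hKne : (K:ℝ) ≠ 0 := Nat.cast_ne_zero.mpr hK.ne'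
  have hSsqrt : ∀ j, S j = (hSig j).sqrt := fun j =>
    (hS j).eq_sqrt_of_sq_eq (hSig j) (by rw [pow_two, hSsq])
  have hScomm : ∀ i j, S i * S j = S j * S i := by
    intro i j
    have h1 : Sig i * S j = S j * Sig i := by
      rw [hSsqrt j]
      exact (commute_sqrt (hSig j) (hcomm j i)).symm
    rw [hSsqrt i]
    exact commute_sqrt (hSig i) h1
  have hAS : ∀ j, A * S j = S j * A := by
    intro j
    rw [hA, Matrix.smul_mul, Matrix.mul_smul, Finset.sum_mul, Finset.mul_sum]
    congr 1
    exact Finset.sum_congr rfl fun i _ => hScomm i j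
  have hApsd : A.PosSemidef := by
    rw [hA]
    exact psd_smul_sum hS (by positivity)
  have hASpsd : ∀ j, (A * S j).PosSemidef := by
    intro j
    have hc : hApsd.sqrt * S j = S j * hApsd.sqrt :=
      commute_sqrt hApsd (hAS j)
    have heq : A * S j = hApsd.sqrtᴴ * S j * hApsd.sqrt := by
      rw [hApsd.posSemidef_sqrt.1]
      calc A * S j = hApsd.sqrt * hApsd.sqrt * S j := by rw [hApsd.sqrt_mul_self]
        _ = hApsd.sqrt * (hApsd.sqrt * S j) := by rw [Matrix.mul_assoc]
        _ = hApsd.sqrt * (S j * hApsd.sqrt) := by rw [hc]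
        _ = hApsd.sqrt * S j * hApsd.sqrt := by rw [Matrix.mul_assoc]
    rw [heq]
    exact (hS j).conjTranspose_mul_mul_same _
  have hQeq : ∀ j, Q j = A * S j := by
    intro j
    refine (hQ j).eq_of_sq_eq_sq (hASpsd j) ?_
    rw [pow_two, pow_two, hQsq]
    calc A * Sig j * A = A * (S j * S j) * A := by rw [hSsq]
      _ = A * S j * (S j * A) := by simp [Matrix.mul_assoc]
      _ = A * S j * (A * S j) := by rw [hAS j]
  have hsum : ∑ j, S j = (K:ℝ) • A := by
    rw [hA, smul_smul, mul_inv_cancel₀ hKne, one_smul]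
  calc ∑ j, Q j = ∑ j, A * S j := Finset.sum_congr rfl fun j _ => hQeq j
    _ = A * ∑ j, S j := (Finset.mul_sum _ _ _).symm
    _ = (K:ℝ) • (A * A) := by rw [hsum, Matrix.mul_smul]
    _ = (K:ℝ) • SigBar := by rw [hSigBar]
end

section
/- Under the assumptions of the Fréchet-mean fixed-point equation, each transport map has operator norm at most K: if Q_j = (Σ̄^{1/2} Σ_j Σ̄^{1/2})^{1/2} satisfies Q_j ≤ ∑_{i=1}^K Q_i = K·Σ̄ in the Loewner order and Σ̄ is positive definite, then t_j = Σ̄^{-1/2} Q_j Σ̄^{-1/2} satisfies ‖t_j‖_∞ ≤ K. -/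
open scoped Matrix.Norms.L2Operator
open scoped Matrix
open scoped MatrixOrder

lemma psd_add' {n : ℕ} {A B : Matrix (Fin n) (Fin n) ℝ} (hA : A.PosSemidef)
    (hB : B.PosSemidef) : (A + B).PosSemidef := by
  refine ⟨hA.1.add hB.1, fun x => ?_⟩
  exact (hA.add hB).2 x

lemma psd_smul' {n : ℕ} {A : Matrix (Fin n) (Fin n) ℝ} (hA : A.PosSemidef) {c : ℝ}
    (hc : 0 ≤ c) : (c • A).PosSemidef := by
  have hH : (c • A).IsHermitian := by
    unfold Matrix.IsHermitian
    rw [Matrix.conjTranspose_smul, hA.1.eq]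
    simp
  refine ⟨hH, fun x => ?_⟩
  exact (hA.smul hc).2 x

lemma norm_le_of_psd {n : ℕ} {A : Matrix (Fin n) (Fin n) ℝ} (hA : A.PosSemidef) {c : ℝ}
    (hc : 0 ≤ c) (h : (c • (1 : Matrix (Fin n) (Fin n) ℝ) - A).PosSemidef) : ‖A‖ ≤ c := by
  -- first: (c^2 • 1 - A * A) is PSD
  set R := CFC.sqrt A with hR
  have hRpsd : R.PosSemidef := Matrix.nonneg_iff_posSemidef.mp (CFC.sqrt_nonneg A)
  have hRR : R * R = A := CFC.sqrt_mul_sqrt_self A hA.nonneg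
  have h1 : (R * (c • (1 : Matrix (Fin n) (Fin n) ℝ) - A) * R).PosSemidef := by
    have := h.mul_mul_conjTranspose_same R
    rwa [hRpsd.1.eq] at this
  have key : ((c ^ 2) • (1 : Matrix (Fin n) (Fin n) ℝ) - A * A).PosSemidef := by
    have hsum : (c ^ 2) • (1 : Matrix (Fin n) (Fin n) ℝ) - A * A
        = c • (c • (1 : Matrix (Fin n) (Fin n) ℝ) - A)
          + R * (c • (1 : Matrix (Fin n) (Fin n) ℝ) - A) * R := by
      rw [Matrix.mul_sub, Matrix.sub_mul, Matrix.mul_smul, Matrix.smul_mul, mul_one,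
        hRR, smul_sub]
      have : R * A * R = A * A := by
        rw [← hRR]; noncomm_ring
      rw [this]
      module
    rw [hsum]
    exact psd_add' (psd_smul' h hc) h1
  -- now bound the operator norm
  rw [Matrix.l2_opNorm_def]
  refine ContinuousLinearMap.opNorm_le_bound _ hc fun x => ?_
  have hx : ∀ y : EuclideanSpace ℝ (Fin n), ‖y‖ ^ 2 = dotProduct (y : Fin n → ℝ) y := by
    intro y
    rw [← real_inner_self_eq_norm_sq]
    simp only [PiLp.inner_apply, dotProduct, RCLike.inner_apply, conj_trivial]
  have happly : ((Matrix.toEuclideanLin.trans LinearMap.toContinuousLinearMap A) x : Fin n → ℝ)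
      = A.mulVec (x : Fin n → ℝ) := rfl
  have hAT : Aᵀ = A := by
    rw [← Matrix.conjTranspose_eq_transpose_of_trivial, hA.1.eq]
  have hAA : dotProduct (A.mulVec x) (A.mulVec x)
      = dotProduct (x : Fin n → ℝ) ((A * A).mulVec x) := by
    rw [← Matrix.mulVec_mulVec, Matrix.dotProduct_mulVec, ← Matrix.mulVec_transpose, hAT]
    exact dotProduct_comm _ _
  have hkey := key.dotProduct_mulVec_nonneg (x : Fin n → ℝ)
  rw [star_trivial, Matrix.sub_mulVec, dotProduct_sub, Matrix.smul_mulVec,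
    Matrix.one_mulVec, dotProduct_smul] at hkey
  have hsq : ‖(Matrix.toEuclideanLin.trans LinearMap.toContinuousLinearMap A) x‖ ^ 2
      ≤ (c * ‖x‖) ^ 2 := by
    rw [hx]
    rw [happly, hAA]
    have hx2 : ‖x‖ ^ 2 = dotProduct (x : Fin n → ℝ) x := hx x
    calc dotProduct (x : Fin n → ℝ) ((A * A).mulVec x)
        ≤ c ^ 2 * dotProduct (x : Fin n → ℝ) x := by
          have := sub_nonneg.mp hkey
          simpa [smul_eq_mul] using this
      _ = (c * ‖x‖) ^ 2 := by rw [← hx2]; ring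
  have h0 : (0 : ℝ) ≤ c * ‖x‖ := mul_nonneg hc (norm_nonneg _)
  nlinarith [norm_nonneg ((Matrix.toEuclideanLin.trans LinearMap.toContinuousLinearMap A) x)]

/-- If `Qⱼ = (Σ̄^{1/2} Σⱼ Σ̄^{1/2})^{1/2}` satisfies `Qⱼ ≤ ∑ᵢ Qᵢ = K·Σ̄` in the Loewner
order and `Σ̄` is positive definite, then the transport map `tⱼ = Σ̄^{-1/2} Qⱼ Σ̄^{-1/2}`
has operator (spectral) norm at most `K`. -/
theorem stmt7 {n K : ℕ} (hK : 0 < K)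
    (Sig : Fin K → Matrix (Fin n) (Fin n) ℝ) (hSig : ∀ i, (Sig i).PosDef)
    (SigBar : Matrix (Fin n) (Fin n) ℝ) (hSigBar : SigBar.PosDef)
    (S : Matrix (Fin n) (Fin n) ℝ) (hS : S.PosSemidef) (hSsq : S * S = SigBar)
    (Q : Fin K → Matrix (Fin n) (Fin n) ℝ)
    (hQ : ∀ i, (Q i).PosSemidef) (hQsq : ∀ i, Q i * Q i = S * Sig i * S)
    (hfix : ∑ i, Q i = (K : ℝ) • SigBar)
    (j : Fin K) (hLoewner : ((K : ℝ) • SigBar - Q j).PosSemidef)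
    (t : Matrix (Fin n) (Fin n) ℝ) (ht : t = S⁻¹ * Q j * S⁻¹) :
    ‖t‖ ≤ (K : ℝ) := by
  have hdet : IsUnit S.det := by
    have h1 : S.det * S.det = SigBar.det := by rw [← Matrix.det_mul, hSsq]
    have h2 : 0 < SigBar.det := hSigBar.det_pos
    have : S.det ≠ 0 := fun h => by simp [h] at h1; exact h2.ne' h1.symm
    exact isUnit_iff_ne_zero.mpr this
  have hSinv : (S⁻¹)ᴴ = S⁻¹ := by
    rw [Matrix.conjTranspose_nonsing_inv, hS.1.eq]
  have htpsd : t.PosSemidef := by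
    rw [ht]
    have := (hQ j).mul_mul_conjTranspose_same S⁻¹
    rwa [hSinv] at this
  have hconj : (S⁻¹ * ((K : ℝ) • SigBar - Q j) * S⁻¹).PosSemidef := by
    have := hLoewner.mul_mul_conjTranspose_same S⁻¹
    rwa [hSinv] at this
  have heq : S⁻¹ * ((K : ℝ) • SigBar - Q j) * S⁻¹
      = (K : ℝ) • (1 : Matrix (Fin n) (Fin n) ℝ) - t := by
    rw [ht, ← hSsq, Matrix.mul_sub, Matrix.sub_mul]
    congr 1
    rw [Matrix.mul_smul, Matrix.smul_mul]
    congr 1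
    calc S⁻¹ * (S * S) * S⁻¹ = (S⁻¹ * S) * (S * S⁻¹) := by noncomm_ring
      _ = 1 := by rw [Matrix.nonsing_inv_mul S hdet, Matrix.mul_nonsing_inv S hdet, one_mul]
  rw [heq] at hconj
  exact norm_le_of_psd htpsd (Nat.cast_nonneg K) hconj
end

section
/- For positive definite Σ and any unitary U, the Procrustes infimum is attained within the bound: ‖Σ₁^{1/2} − Σ₂^{1/2}U‖_2² ≥ tr Σ₁ + tr Σ₂ − 2 tr((Σ₁^{1/2} Σ₂ Σ₁^{1/2})^{1/2}) for all orthogonal matrices U and positive semidefinite Σ₁, Σ₂. -/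
open Matrix

/-- Key lemma: for any `M`, orthogonal `U`, and psd `Q` with `Q * Q = Mᵀ * M`,
`trace (Mᵀ * U) ≤ trace Q`. -/
lemma trace_mul_le_trace_sqrt {n : ℕ} (M Q U : Matrix (Fin n) (Fin n) ℝ)
    (hQ : Q.PosSemidef) (hQsq : Q * Q = Mᵀ * M) (hU : Uᵀ * U = 1) :
    (Mᵀ * U).trace ≤ Q.trace := by
  have hH : Q.IsHermitian := hQ.isHermitian
  set E : Matrix (Fin n) (Fin n) ℝ := (hH.eigenvectorUnitary : Matrix (Fin n) (Fin n) ℝ) with hE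
  have hstar : star E = Eᵀ := by
    rw [Matrix.star_eq_conjTranspose, conjTranspose_eq_transpose_of_trivial]
  have hEtE : Eᵀ * E = 1 := by
    rw [← hstar]; exact (Matrix.mem_unitaryGroup_iff').mp hH.eigenvectorUnitary.2
  have hEEt : E * Eᵀ = 1 := by
    rw [← hstar]; exact (Matrix.mem_unitaryGroup_iff).mp hH.eigenvectorUnitary.2
  have hdiag : Eᵀ * Q * E = diagonal hH.eigenvalues := by
    have := hH.conjStarAlgAut_star_eigenvectorUnitary
    simp only [Unitary.conjStarAlgAut_apply, Unitary.coe_star, star_star] at this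
    rw [hstar] at this
    simpa using this
  -- trace invariance under conjugation
  have h1 : (Mᵀ * U).trace = ((M * E)ᵀ * (U * E)).trace := by
    rw [transpose_mul]
    calc (Mᵀ * U).trace = (E * (Eᵀ * (Mᵀ * U))).trace := by
          rw [← mul_assoc, hEEt, one_mul]
    _ = ((Eᵀ * (Mᵀ * U)) * E).trace := trace_mul_comm _ _
    _ = (Eᵀ * Mᵀ * (U * E)).trace := by noncomm_ring
  set P := M * E with hP
  set R := U * E with hR
  have hPtP : Pᵀ * P = diagonal (fun i => hH.eigenvalues i ^ 2) := by
    have : Pᵀ * P = Eᵀ * (Mᵀ * M) * E := by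
      rw [hP, transpose_mul]; noncomm_ring
    rw [this, ← hQsq]
    have : Eᵀ * (Q * Q) * E = (Eᵀ * Q * E) * (Eᵀ * Q * E) := by
      calc Eᵀ * (Q * Q) * E = (Eᵀ * Q) * (E * Eᵀ) * (Q * E) := by rw [hEEt]; noncomm_ring
      _ = (Eᵀ * Q * E) * (Eᵀ * Q * E) := by noncomm_ring
    rw [this, hdiag, diagonal_mul_diagonal]
    congr 1; ext i; ring
  have hRtR : Rᵀ * R = 1 := by
    rw [hR, transpose_mul, mul_assoc, ← mul_assoc Uᵀ, hU, one_mul, hEtE]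
  have hQtr : Q.trace = ∑ i, hH.eigenvalues i := by
    have : (Eᵀ * Q * E).trace = Q.trace := by
      rw [trace_mul_comm, ← mul_assoc, hEEt, one_mul]
    rw [← this, hdiag, trace_diagonal]
  rw [h1, hQtr, Matrix.trace]
  apply Finset.sum_le_sum
  intro i _
  have hcol : ∑ j, P j i * R j i ≤ Real.sqrt ((∑ j, (P j i) ^ 2) * (∑ j, (R j i) ^ 2)) := by
    calc ∑ j, P j i * R j i ≤ |∑ j, P j i * R j i| := le_abs_self _
    _ = Real.sqrt ((∑ j, P j i * R j i) ^ 2) := (Real.sqrt_sq_eq_abs _).symm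
    _ ≤ _ := Real.sqrt_le_sqrt (Finset.sum_mul_sq_le_sq_mul_sq _ _ _)
  have hPi : ∑ j, (P j i) ^ 2 = hH.eigenvalues i ^ 2 := by
    have := congrFun (congrFun hPtP i) i
    simpa [Matrix.mul_apply, pow_two] using this
  have hRi : ∑ j, (R j i) ^ 2 = 1 := by
    have := congrFun (congrFun hRtR i) i
    simpa [Matrix.mul_apply, pow_two] using this
  have : ((P)ᵀ * R).diag i = ∑ j, P j i * R j i := by
    simp [Matrix.diag, Matrix.mul_apply]
  rw [Matrix.diag_apply, Matrix.mul_apply]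
  calc ∑ j, Pᵀ i j * R j i = ∑ j, P j i * R j i := by simp [Matrix.transpose_apply]
  _ ≤ Real.sqrt ((∑ j, (P j i) ^ 2) * (∑ j, (R j i) ^ 2)) := hcol
  _ = Real.sqrt (hH.eigenvalues i ^ 2) := by rw [hPi, hRi, mul_one]
  _ = hH.eigenvalues i := by
      rw [Real.sqrt_sq (hQ.eigenvalues_nonneg i)]

/-- For positive semidefinite `Σ₁, Σ₂` and any orthogonal matrix `U`,
`‖Σ₁^{1/2} − Σ₂^{1/2} U‖₂² ≥ tr Σ₁ + tr Σ₂ − 2 tr((Σ₁^{1/2} Σ₂ Σ₁^{1/2})^{1/2})`. -/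
theorem stmt11 {n : ℕ} (Sig1 Sig2 : Matrix (Fin n) (Fin n) ℝ)
    (hSig1 : Sig1.PosSemidef) (hSig2 : Sig2.PosSemidef)
    (S1 : Matrix (Fin n) (Fin n) ℝ) (hS1 : S1.PosSemidef) (hS1sq : S1 * S1 = Sig1)
    (S2 : Matrix (Fin n) (Fin n) ℝ) (hS2 : S2.PosSemidef) (hS2sq : S2 * S2 = Sig2)
    (Q : Matrix (Fin n) (Fin n) ℝ) (hQ : Q.PosSemidef) (hQsq : Q * Q = S1 * Sig2 * S1)
    (U : Matrix (Fin n) (Fin n) ℝ) (hU : Uᵀ * U = 1) :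
    Sig1.trace + Sig2.trace - 2 * Q.trace ≤ ((S1 - S2 * U)ᵀ * (S1 - S2 * U)).trace := by
  have hS1t : S1ᵀ = S1 := by
    have := hS1.isHermitian; rwa [Matrix.IsHermitian, conjTranspose_eq_transpose_of_trivial] at this
  have hS2t : S2ᵀ = S2 := by
    have := hS2.isHermitian; rwa [Matrix.IsHermitian, conjTranspose_eq_transpose_of_trivial] at this
  have hUUt : U * Uᵀ = 1 := mul_eq_one_comm.mp hU
  set M := S2 * S1 with hM
  have hMt : Mᵀ = S1 * S2 := by rw [hM, transpose_mul, hS1t, hS2t]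
  have key : (Mᵀ * U).trace ≤ Q.trace := by
    apply trace_mul_le_trace_sqrt M Q U hQ _ hU
    rw [hQsq, hMt, hM, ← hS2sq]; noncomm_ring
  -- expand the RHS
  have expand : ((S1 - S2 * U)ᵀ * (S1 - S2 * U)).trace
      = Sig1.trace + Sig2.trace - 2 * (Mᵀ * U).trace := by
    have h2 : ((S2 * U)ᵀ * (S2 * U)).trace = Sig2.trace := by
      rw [transpose_mul, hS2t]
      calc (Uᵀ * S2 * (S2 * U)).trace = (Uᵀ * (S2 * S2 * U)).trace := by noncomm_ring
      _ = ((S2 * S2 * U) * Uᵀ).trace := trace_mul_comm _ _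
      _ = Sig2.trace := by rw [mul_assoc, hUUt, mul_one, hS2sq]
    have h3 : ((S2 * U)ᵀ * S1).trace = (Mᵀ * U).trace := by
      rw [← trace_transpose ((S2 * U)ᵀ * S1), transpose_mul, transpose_transpose,
        hS1t, hMt, ← mul_assoc]
    have h4 : (S1ᵀ * (S2 * U)).trace = (Mᵀ * U).trace := by
      rw [hS1t, hMt, ← mul_assoc]
    rw [transpose_sub, sub_mul, mul_sub, mul_sub, trace_sub, trace_sub, trace_sub,
      hS1t]
    rw [hS1t] at h4
    rw [h2, h3, h4, hS1sq]
    ring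
  rw [expand]
  linarith
end
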